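/- For positive integers d and i, the number S_2(d,i) of partitions of the set {1,...,d} into i parts each of size at least 2 satisfies S_2(d,i) ≤ C(d,i) · i^(d-i) · 2^(-i), where C(d,i) is the binomial coefficient. -/

import Mathlib

open Finset

/-- `S2 d i` is the number of partitions of a `d`-element set into exactly `i`
blocks, each of size at least `2`. -/
def S2 (d i : ℕ) : ℕ :=
  (Finset.univ.filter fun P : Finset (Finset (Fin d)) =>
    P.card = i ∧ (∀ p ∈ P, 2 ≤ p.card) ∧
      ∀ v : Fin d, (P.filter fun p => v ∈ p).card = 1).card

section aux
variable {d i : ℕ}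

/-- The block of partition `P` containing `v` (junk if not unique). -/
def blockOf (P : Finset (Finset (Fin d))) (v : Fin d) : Finset (Fin d) :=
  (P.filter (fun p => v ∈ p)).sup id

/-- Pick the minimum (if `b = true`) or the second minimum (if `b = false`) of `p`. -/
def rep (hd : 0 < d) (p : Finset (Fin d)) (b : Bool) : Fin d :=
  if h : p.Nonempty then
    if b then p.min' h
    else if h2 : (p.erase (p.min' h)).Nonempty then (p.erase (p.min' h)).min' h2
    else p.min' h
  else ⟨0, hd⟩

/-- The rank of `v` in `A`. -/
def rk (A : Finset (Fin d)) (v : Fin d) : ℕ := (A.filter (· < v)).card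

lemma rep_mem (hd : 0 < d) {p : Finset (Fin d)} (hp : 2 ≤ p.card) (b : Bool) :
    rep hd p b ∈ p := by
  have hne : p.Nonempty := Finset.card_pos.mp (by omega)
  unfold rep
  rw [dif_pos hne]
  cases b with
  | true => simpa using p.min'_mem hne
  | false =>
    simp only [Bool.false_eq_true, if_false]
    by_cases h2 : (p.erase (p.min' hne)).Nonempty
    · rw [dif_pos h2]
      exact Finset.mem_of_mem_erase ((p.erase (p.min' hne)).min'_mem h2)
    · rw [dif_neg h2]; exact p.min'_mem hne

lemma rep_erase_nonempty (hd : 0 < d) {p : Finset (Fin d)} (hp : 2 ≤ p.card)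
    (h : p.Nonempty) : (p.erase (p.min' h)).Nonempty := by
  rw [← Finset.card_pos, Finset.card_erase_of_mem (p.min'_mem h)]
  omega

lemma rep_inj (hd : 0 < d) {p : Finset (Fin d)} (hp : 2 ≤ p.card) {b b' : Bool}
    (h : rep hd p b = rep hd p b') : b = b' := by
  have hne : p.Nonempty := Finset.card_pos.mp (by omega)
  have h2 := rep_erase_nonempty hd hp hne
  have ht : rep hd p true = p.min' hne := by
    unfold rep; rw [dif_pos hne]; rfl
  have hf : rep hd p false = (p.erase (p.min' hne)).min' h2 := by
    unfold rep; rw [dif_pos hne]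
    simp only [Bool.false_eq_true, if_false]
    rw [dif_pos h2]
  have key : rep hd p true ≠ rep hd p false := by
    rw [ht, hf]
    intro hcontra
    have := (p.erase (p.min' hne)).min'_mem h2
    rw [← hcontra] at this
    exact (p.notMem_erase _) this
  cases b <;> cases b' <;> first | rfl | exact absurd h key | exact absurd h.symm key

lemma rk_lt {A : Finset (Fin d)} {a : Fin d} (ha : a ∈ A) : rk A a < A.card := by
  apply Finset.card_lt_card
  constructor
  · exact Finset.filter_subset _ _
  · intro hsub
    have := hsub ha
    simp at this

lemma rk_strictMono {A : Finset (Fin d)} {a b : Fin d} (ha : a ∈ A) (hab : a < b) :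
    rk A a < rk A b := by
  apply Finset.card_lt_card
  constructor
  · intro z hz
    simp only [Finset.mem_filter] at hz ⊢
    exact ⟨hz.1, lt_trans hz.2 hab⟩
  · intro hsub
    have h1 : a ∈ A.filter (· < b) := Finset.mem_filter.mpr ⟨ha, hab⟩
    have h2 := hsub h1
    simp at h2

lemma rk_injOn {A : Finset (Fin d)} {a b : Fin d} (ha : a ∈ A) (hb : b ∈ A)
    (h : rk A a = rk A b) : a = b := by
  rcases lt_trichotomy a b with hlt | heq | hgt
  · exact absurd h (rk_strictMono ha hlt).ne
  · exact heq
  · exact absurd h.symm (rk_strictMono hb hgt).ne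

/-- Counting functions with prescribed values on a subset. -/
lemma card_fixed {α β : Type*} [Fintype α] [DecidableEq α] [Fintype β] [DecidableEq β]
    (s : Finset α) (g : α → β) :
    (Finset.univ.filter (fun f : α → β => ∀ a ∈ s, f a = g a)).card
      = Fintype.card β ^ (Fintype.card α - s.card) := by
  classical
  rw [← Fintype.card_subtype]
  have e : {f : α → β // ∀ a ∈ s, f a = g a} ≃ ({a : α // a ∉ s} → β) :=
    { toFun := fun F x => F.1 x.1
      invFun := fun h => ⟨fun a => if ha : a ∈ s then g a else h ⟨a, ha⟩,
        fun a ha => dif_pos ha⟩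
      left_inv := fun F => Subtype.ext (funext fun a => by
        by_cases ha : a ∈ s
        · simp [ha, F.2 a ha]
        · simp [ha])
      right_inv := fun h => funext fun x => by simp [x.2] }
  rw [Fintype.card_congr e, Fintype.card_fun]
  congr 1
  rw [Fintype.card_subtype]
  have : Finset.univ.filter (fun a : α => a ∉ s) = sᶜ := by
    ext a; simp
  rw [this, Finset.card_compl]

lemma blockOf_spec {P : Finset (Finset (Fin d))}
    (hP : ∀ v : Fin d, (P.filter fun p => v ∈ p).card = 1) (v : Fin d) :
    blockOf P v ∈ P ∧ v ∈ blockOf P v := by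
  obtain ⟨p, hp⟩ := Finset.card_eq_one.mp (hP v)
  have hpmem : p ∈ P.filter (fun p => v ∈ p) := hp ▸ Finset.mem_singleton_self p
  rw [Finset.mem_filter] at hpmem
  have hb : blockOf P v = p := by
    unfold blockOf; rw [hp, Finset.sup_singleton]; rfl
  rw [hb]; exact hpmem

lemma blockOf_eq {P : Finset (Finset (Fin d))}
    (hP : ∀ v : Fin d, (P.filter fun p => v ∈ p).card = 1) {v : Fin d}
    {p : Finset (Fin d)} (hpP : p ∈ P) (hvp : v ∈ p) : blockOf P v = p := by
  obtain ⟨q, hq⟩ := Finset.card_eq_one.mp (hP v)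
  have hb : blockOf P v = q := by
    unfold blockOf; rw [hq, Finset.sup_singleton]; rfl
  have hpq : p ∈ P.filter (fun p => v ∈ p) := Finset.mem_filter.mpr ⟨hpP, hvp⟩
  rw [hq, Finset.mem_singleton] at hpq
  rw [hb, ← hpq]

lemma mem_iff_blockOf {P : Finset (Finset (Fin d))}
    (hP : ∀ v : Fin d, (P.filter fun p => v ∈ p).card = 1) {v : Fin d}
    {p : Finset (Fin d)} (hpP : p ∈ P) : v ∈ p ↔ blockOf P v = p :=
  ⟨blockOf_eq hP hpP, fun h => h ▸ (blockOf_spec hP v).2⟩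

/-- The set of representatives chosen by `ε`. -/
def Aof (hd : 0 < d) (P : Finset (Finset (Fin d))) (ε : Finset (Fin d) → Bool) :
    Finset (Fin d) :=
  P.image (fun p => rep hd p (ε p))

/-- The encoding map. -/
def Φ (hd : 0 < d) (hi : 0 < i) (P : Finset (Finset (Fin d)))
    (ε : Finset (Fin d) → Bool) : Finset (Fin d) × (Fin d → Fin i) :=
  (Aof hd P ε, fun v =>
    ⟨rk (Aof hd P ε) (rep hd (blockOf P v) (ε (blockOf P v))) % i, Nat.mod_lt _ hi⟩)

variable {P : Finset (Finset (Fin d))} {ε : Finset (Fin d) → Bool}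

lemma repInjP (hd : 0 < d) (h2le : ∀ p ∈ P, 2 ≤ p.card)
    (huniq : ∀ v : Fin d, (P.filter fun p => v ∈ p).card = 1)
    {p q : Finset (Fin d)} (hp : p ∈ P) (hq : q ∈ P) {b b' : Bool}
    (h : rep hd p b = rep hd q b') : p = q := by
  have h1 : blockOf P (rep hd p b) = p := blockOf_eq huniq hp (rep_mem hd (h2le p hp) b)
  have h2 : blockOf P (rep hd q b') = q := blockOf_eq huniq hq (rep_mem hd (h2le q hq) b')
  rw [← h1, ← h2, h]

lemma Aof_card (hd : 0 < d) (h2le : ∀ p ∈ P, 2 ≤ p.card)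
    (huniq : ∀ v : Fin d, (P.filter fun p => v ∈ p).card = 1) :
    (Aof hd P ε).card = P.card :=
  Finset.card_image_of_injOn (fun p hp q hq h => repInjP hd h2le huniq hp hq h)

lemma phi_snd_eq (hd : 0 < d) (hi : 0 < i) (h2le : ∀ p ∈ P, 2 ≤ p.card)
    (huniq : ∀ v : Fin d, (P.filter fun p => v ∈ p).card = 1) (hPi : P.card = i)
    (v : Fin d) :
    ((Φ hd hi P ε).2 v : ℕ)
      = rk (Aof hd P ε) (rep hd (blockOf P v) (ε (blockOf P v))) := by
  have hblk := (blockOf_spec huniq v).1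
  have hmem : rep hd (blockOf P v) (ε (blockOf P v)) ∈ Aof hd P ε :=
    Finset.mem_image_of_mem _ hblk
  have hlt := rk_lt hmem
  rw [Aof_card hd h2le huniq, hPi] at hlt
  exact Nat.mod_eq_of_lt hlt

lemma phi_fiber (hd : 0 < d) (hi : 0 < i) (h2le : ∀ p ∈ P, 2 ≤ p.card)
    (huniq : ∀ v : Fin d, (P.filter fun p => v ∈ p).card = 1) (hPi : P.card = i)
    (v w : Fin d) :
    (Φ hd hi P ε).2 v = (Φ hd hi P ε).2 w ↔ blockOf P v = blockOf P w := by
  constructor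
  · intro h
    have h' := congrArg Fin.val h
    rw [phi_snd_eq hd hi h2le huniq hPi, phi_snd_eq hd hi h2le huniq hPi] at h'
    have hv : rep hd (blockOf P v) (ε (blockOf P v)) ∈ Aof hd P ε :=
      Finset.mem_image_of_mem _ (blockOf_spec huniq v).1
    have hw : rep hd (blockOf P w) (ε (blockOf P w)) ∈ Aof hd P ε :=
      Finset.mem_image_of_mem _ (blockOf_spec huniq w).1
    have := rk_injOn hv hw h'
    exact repInjP hd h2le huniq (blockOf_spec huniq v).1 (blockOf_spec huniq w).1 this
  · intro h
    apply Fin.ext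
    show rk (Aof hd P ε) (rep hd (blockOf P v) (ε (blockOf P v))) % i
      = rk (Aof hd P ε) (rep hd (blockOf P w) (ε (blockOf P w))) % i
    rw [h]

/-- From the encoding one can recover the partition. -/
lemma recover (hd : 0 < d) (hi : 0 < i) (h2le : ∀ p ∈ P, 2 ≤ p.card)
    (huniq : ∀ v : Fin d, (P.filter fun p => v ∈ p).card = 1) (hPi : P.card = i) :
    P = (Aof hd P ε).image
      (fun a => Finset.univ.filter (fun v => (Φ hd hi P ε).2 v = (Φ hd hi P ε).2 a)) := by
  ext p
  constructor
  · intro hp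
    apply Finset.mem_image.mpr
    refine ⟨rep hd p (ε p), Finset.mem_image_of_mem _ hp, ?_⟩
    ext v
    simp only [Finset.mem_filter, Finset.mem_univ, true_and]
    rw [phi_fiber hd hi h2le huniq hPi]
    have hrep : blockOf P (rep hd p (ε p)) = p :=
      blockOf_eq huniq hp (rep_mem hd (h2le p hp) _)
    rw [hrep]
    exact (mem_iff_blockOf huniq hp).symm
  · intro hp
    obtain ⟨a, ha, rfl⟩ := Finset.mem_image.mp hp
    obtain ⟨q, hq, rfl⟩ := Finset.mem_image.mp ha
    have hrep : blockOf P (rep hd q (ε q)) = q :=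
      blockOf_eq huniq hq (rep_mem hd (h2le q hq) _)
    have : Finset.univ.filter
        (fun v => (Φ hd hi P ε).2 v = (Φ hd hi P ε).2 (rep hd q (ε q))) = q := by
      ext v
      simp only [Finset.mem_filter, Finset.mem_univ, true_and]
      rw [phi_fiber hd hi h2le huniq hPi, hrep]
      exact (mem_iff_blockOf huniq hq).symm
    rw [this]
    exact hq

end aux

theorem key (d i : ℕ) (hd : 0 < d) (hi : 0 < i) :
    S2 d i * 2 ^ i ≤ d.choose i * i ^ (d - i) := by
  classical
  set Sset := (Finset.univ.filter fun P : Finset (Finset (Fin d)) =>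
    P.card = i ∧ (∀ p ∈ P, 2 ≤ p.card) ∧
      ∀ v : Fin d, (P.filter fun p => v ∈ p).card = 1) with hSset
  set T := ((Finset.powersetCard i (Finset.univ : Finset (Fin d)) ×ˢ
      (Finset.univ : Finset (Fin d → Fin i))).filter
    (fun t => ∀ a ∈ t.1, (t.2 a : ℕ) = rk t.1 a)) with hT
  set D := Sset.sigma (fun P =>
    (Finset.univ : Finset (Finset (Fin d) → Bool)).filter
      (fun ε => ∀ q, q ∉ P → ε q = false)) with hD
  -- Step 1 : |T| ≤ C(d,i) i^(d-i)
  have hTcard : T.card ≤ d.choose i * i ^ (d - i) := by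
    have hmap : ∀ t ∈ T, t.1 ∈ Finset.powersetCard i (Finset.univ : Finset (Fin d)) := by
      intro t ht
      exact (Finset.mem_product.mp (Finset.mem_filter.mp ht).1).1
    rw [Finset.card_eq_sum_card_fiberwise hmap]
    have hbound : ∀ A ∈ Finset.powersetCard i (Finset.univ : Finset (Fin d)),
        (T.filter (fun t => t.1 = A)).card ≤ i ^ (d - i) := by
      intro A hA
      have hAcard : A.card = i := (Finset.mem_powersetCard.mp hA).2
      have step1 : (T.filter (fun t => t.1 = A)).card ≤
          (Finset.univ.filter (fun f : Fin d → Fin i =>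
            ∀ a ∈ A, f a = ⟨rk A a % i, Nat.mod_lt _ hi⟩)).card := by
        apply Finset.card_le_card_of_injOn (fun t => t.2)
        · intro t ht
          rw [Finset.mem_coe, Finset.mem_filter] at ht
          obtain ⟨htT, ht1⟩ := ht
          have hcond := (Finset.mem_filter.mp htT).2
          refine Finset.mem_filter.mpr ⟨Finset.mem_univ _, fun a ha => ?_⟩
          have h1 := hcond a (ht1 ▸ ha)
          rw [ht1] at h1
          apply Fin.ext
          show (t.2 a : ℕ) = rk A a % i
          rw [h1, Nat.mod_eq_of_lt (hAcard ▸ rk_lt ha)]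
        · intro t ht t' ht' h2
          have h1 := (Finset.mem_filter.mp ht).2
          have h1' := (Finset.mem_filter.mp ht').2
          exact Prod.ext (h1.trans h1'.symm) h2
      calc (T.filter (fun t => t.1 = A)).card
          ≤ _ := step1
        _ = i ^ (d - i) := by
            have hcf := card_fixed (β := Fin i) A
              (fun a => (⟨rk A a % i, Nat.mod_lt _ hi⟩ : Fin i))
            rw [Fintype.card_fin, Fintype.card_fin, hAcard] at hcf
            convert hcf using 2
            exact (Finset.filter_congr_decidable _ _ _).symm
    calc ∑ A ∈ Finset.powersetCard i (Finset.univ : Finset (Fin d)),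
          (T.filter (fun t => t.1 = A)).card
        ≤ ∑ _A ∈ Finset.powersetCard i (Finset.univ : Finset (Fin d)), i ^ (d - i) :=
          Finset.sum_le_sum hbound
      _ = d.choose i * i ^ (d - i) := by
          rw [Finset.sum_const, smul_eq_mul, Finset.card_powersetCard]
          simp
  -- Step 2 : |D| = S2 d i * 2^i
  have hDcard : D.card = S2 d i * 2 ^ i := by
    rw [hD, Finset.card_sigma]
    have heach : ∀ P ∈ Sset,
        ((Finset.univ : Finset (Finset (Fin d) → Bool)).filter
          (fun ε => ∀ q, q ∉ P → ε q = false)).card = 2 ^ i := by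
      intro P hP
      have hPi : P.card = i := ((Finset.mem_filter.mp hP).2).1
      have hrw : ((Finset.univ : Finset (Finset (Fin d) → Bool)).filter
            (fun ε => ∀ q, q ∉ P → ε q = false))
          = Finset.univ.filter (fun ε : Finset (Fin d) → Bool =>
              ∀ q ∈ Pᶜ, ε q = (fun _ => false) q) := by
        apply Finset.filter_congr
        intro ε _
        simp [Finset.mem_compl]
      rw [hrw, card_fixed]
      rw [Finset.card_compl, hPi]
      have hle : i ≤ Fintype.card (Finset (Fin d)) := by
        rw [← hPi]
        exact Finset.card_le_univ P
      congr 1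
      omega
    rw [Finset.sum_congr rfl heach, Finset.sum_const, smul_eq_mul]
    rfl
  -- Step 3 : |D| ≤ |T| via Φ
  have hDT : D.card ≤ T.card := by
    apply Finset.card_le_card_of_injOn (fun x => Φ hd hi x.1 x.2)
    · rintro ⟨P, ε⟩ hx
      rw [hD, Finset.mem_coe, Finset.mem_sigma] at hx
      obtain ⟨hPS, hεm⟩ := hx
      obtain ⟨hPi, h2le, huniq⟩ := (Finset.mem_filter.mp hPS).2
      have hε : ∀ q, q ∉ P → ε q = false := (Finset.mem_filter.mp hεm).2
      have hAcard : (Aof hd P ε).card = i := by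
        rw [Aof_card hd h2le huniq, hPi]
      rw [hT, Finset.mem_coe, Finset.mem_filter]
      constructor
      · exact Finset.mem_product.mpr
          ⟨Finset.mem_powersetCard.mpr ⟨Finset.subset_univ _, hAcard⟩, Finset.mem_univ _⟩
      · intro a ha
        show ((Φ hd hi P ε).2 a : ℕ) = rk (Aof hd P ε) a
        obtain ⟨p, hp, rfl⟩ := Finset.mem_image.mp ha
        rw [phi_snd_eq hd hi h2le huniq hPi]
        congr 2 <;>
          rw [blockOf_eq huniq hp (rep_mem hd (h2le p hp) _)]
    · rintro ⟨P, ε⟩ hx ⟨P', ε'⟩ hy hΦeq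
      simp only [hD, Finset.mem_coe, Finset.mem_sigma] at hx hy
      obtain ⟨hPS, hεm⟩ := hx
      obtain ⟨hPS', hεm'⟩ := hy
      obtain ⟨hPi, h2le, huniq⟩ := (Finset.mem_filter.mp hPS).2
      obtain ⟨hPi', h2le', huniq'⟩ := (Finset.mem_filter.mp hPS').2
      have hε : ∀ q, q ∉ P → ε q = false := (Finset.mem_filter.mp hεm).2
      have hε' : ∀ q, q ∉ P' → ε' q = false := (Finset.mem_filter.mp hεm').2
      have hΦ : Φ hd hi P ε = Φ hd hi P' ε' := hΦeq
      have hA : Aof hd P ε = Aof hd P' ε' := congrArg Prod.fst hΦ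
      have hf : (Φ hd hi P ε).2 = (Φ hd hi P' ε').2 := congrArg Prod.snd hΦ
      have hPP : P = P' := by
        rw [recover hd hi h2le huniq hPi (ε := ε),
          recover hd hi h2le' huniq' hPi' (ε := ε'), ← hA, ← hf]
      subst hPP
      have hee : ε = ε' := by
        funext q
        by_cases hq : q ∈ P
        · have hq1 : rep hd q (ε' q) ∈ Aof hd P ε := by
            rw [hA]; exact Finset.mem_image_of_mem _ hq
          obtain ⟨p, hp, hpe⟩ := Finset.mem_image.mp hq1
          have hpq : p = q := by
            have h1 : blockOf P (rep hd p (ε p)) = p :=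
              blockOf_eq huniq hp (rep_mem hd (h2le p hp) _)
            have h2 : blockOf P (rep hd q (ε' q)) = q :=
              blockOf_eq huniq hq (rep_mem hd (h2le q hq) _)
            rw [← h1, ← h2, hpe]
          rw [hpq] at hpe
          exact rep_inj hd (h2le q hq) hpe
        · rw [hε q hq, hε' q hq]
      rw [hee]
  calc S2 d i * 2 ^ i = D.card := hDcard.symm
    _ ≤ T.card := hDT
    _ ≤ d.choose i * i ^ (d - i) := hTcard

theorem stmt_3 (d i : ℕ) (hd : 0 < d) (hi : 0 < i) :
    (S2 d i : ℝ) ≤ (d.choose i : ℝ) * (i : ℝ) ^ (d - i) * (2 : ℝ) ^ (-(i : ℤ)) := by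
  have hkey := key d i hd hi
  have h2 : (0 : ℝ) < 2 ^ i := by positivity
  rw [zpow_neg, zpow_natCast, ← div_eq_mul_inv, le_div_iff₀ h2]
  exact_mod_cast hkey
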